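/- Let G be a connected graph with at least 2 vertices that has a cut vertex (a vertex whose removal disconnects G). Then the minimum size of a connecting transition set of G is exactly |V(G)| − 2. -/

import Mathlib

variable {V : Type*}

/-- The transition consisting of the edges `ab` and `bc`, written `abc`. -/
def transitionOf (a b c : V) : Sym2 (Sym2 V) := s(s(a, b), s(b, c))

/-- `t` is a transition of `G`: an unordered pair of two distinct adjacent edges. -/
def SimpleGraph.IsTransition (G : SimpleGraph V) (t : Sym2 (Sym2 V)) : Prop :=
  ∃ a b c, G.Adj a b ∧ G.Adj b c ∧ a ≠ c ∧ t = transitionOf a b c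

/-- A list of vertices (the support of a walk) is `T`-compatible: every pair of
consecutive edges is either a transition of `T` or a backtrack. -/
def TCompatible (T : Set (Sym2 (Sym2 V))) (l : List V) : Prop :=
  ∀ (i : ℕ) (h : i + 2 < l.length),
    l[i]'(by omega) = l[i + 2]'h ∨
    transitionOf (l[i]'(by omega)) (l[i + 1]'(by omega)) (l[i + 2]'h) ∈ T

/-- `G` is `T`-connected: every two vertices are joined by a `T`-compatible walk. -/
def SimpleGraph.TConnected (G : SimpleGraph V) (T : Set (Sym2 (Sym2 V))) : Prop :=
  ∀ u v : V, ∃ p : G.Walk u v, TCompatible T p.support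

/-- `T` is a connecting transition set of `G`. -/
def SimpleGraph.ConnectingTransitionSet (G : SimpleGraph V)
    (T : Finset (Sym2 (Sym2 V))) : Prop :=
  (∀ t ∈ T, G.IsTransition t) ∧ G.TConnected ↑T

/-- `H` is a connecting hypergraph of `G`: every hyperedge has at least two vertices and
induces a connected subgraph, and every pair of distinct non-adjacent vertices is
contained in a common hyperedge. -/
def SimpleGraph.ConnectingHypergraph (G : SimpleGraph V) (H : Finset (Finset V)) : Prop :=
  (∀ E ∈ H, 2 ≤ E.card ∧ (G.induce (E : Set V)).Connected) ∧
  ∀ u v : V, u ≠ v → ¬G.Adj u v → ∃ E ∈ H, u ∈ E ∧ v ∈ E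

/-- The cost of a hypergraph: the sum over hyperedges of (size − 2). -/
def hcost (H : Finset (Finset V)) : ℕ := ∑ E ∈ H, (E.card - 2)

/-- The quantity τ(G): the sum over co-connected components `C` of `G` with `|C| ≥ 2`
of `|C| − 2` if `G[C]` is connected and `|C| − 1` otherwise. -/
noncomputable def tau {V : Type*} [Fintype V] (G : SimpleGraph V) : ℕ := by
  classical
  haveI : Fintype Gᶜ.ConnectedComponent := Fintype.ofFinite _
  exact ∑ C : Gᶜ.ConnectedComponent,
    if 2 ≤ C.supp.ncard then
      (if (G.induce C.supp).Connected then C.supp.ncard - 2 else C.supp.ncard - 1)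
    else 0

lemma transitionOf_comm (a b c : V) : transitionOf a b c = transitionOf c b a := by
  unfold transitionOf
  rw [Sym2.eq_swap]
  rw [show s(a,b) = s(b,a) from Sym2.eq_swap, show s(b,c) = s(c,b) from Sym2.eq_swap]

inductive Compat (T : Set (Sym2 (Sym2 V))) : List V → Prop
  | nil : Compat T []
  | single (a : V) : Compat T [a]
  | pair (a b : V) : Compat T [a, b]
  | cons (a b c : V) (l : List V) (h : a = c ∨ transitionOf a b c ∈ T)
      (h2 : Compat T (b :: c :: l)) : Compat T (a :: b :: c :: l)

lemma compat_iff {T : Set (Sym2 (Sym2 V))} (l : List V) :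
    Compat T l ↔ TCompatible T l := by
  constructor
  · intro h
    induction h with
    | nil => intro i hi; simp at hi
    | single a => intro i hi; simp at hi
    | pair a b => intro i hi; simp at hi
    | cons a b c l h h2 ih =>
        intro i hi
        match i with
        | 0 => simpa using h
        | (j+1) =>
            have hj : j + 2 < (b :: c :: l).length := by
              simp at hi ⊢; omega
            simpa using ih j hj
  · intro h
    match l with
    | [] => exact Compat.nil
    | [a] => exact Compat.single a
    | [a, b] => exact Compat.pair a b
    | a :: b :: c :: m =>
        refine Compat.cons a b c m (by simpa using h 0 (by simp)) ?_
        have : TCompatible T (b :: c :: m) := by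
          intro i hi
          have hi' : i + 1 + 2 < (a :: b :: c :: m).length := by simp at hi ⊢; omega
          simpa using h (i+1) hi'
        exact (compat_iff (b :: c :: m)).2 this

lemma compat_tail {T : Set (Sym2 (Sym2 V))} {a : V} {l : List V}
    (h : Compat T (a :: l)) : Compat T l := by
  cases h with
  | single => exact Compat.nil
  | pair => exact Compat.single _
  | cons a b c m h h2 => exact h2

lemma cover_sum_bound {α : Type*} [DecidableEq α] :
    ∀ (k : ℕ) (𝒜 : Finset (Finset α)) (U : Finset α), 𝒜.card = k →
    (∀ A ∈ 𝒜, A ⊆ U) → (∀ u ∈ U, ∃ A ∈ 𝒜, u ∈ A) →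
    (∀ u ∈ U, ∀ v ∈ U, Relation.ReflTransGen (fun x y => ∃ A ∈ 𝒜, x ∈ A ∧ y ∈ A) u v) →
    U.card - 1 ≤ ∑ A ∈ 𝒜, (A.card - 1) := by
  intro k
  induction k using Nat.strong_induction_on with
  | _ k ih =>
  intro 𝒜 U hk hsub hcov hch
  by_cases hemp : ∅ ∈ 𝒜
  · have hk1 : 1 ≤ k := by
      rw [← hk]; exact Finset.card_pos.2 ⟨∅, hemp⟩
    have hsum : ∑ A ∈ 𝒜.erase ∅, (A.card - 1) = ∑ A ∈ 𝒜, (A.card - 1) :=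
      Finset.sum_erase _ (by simp)
    rw [← hsum]
    refine ih (k-1) (by omega) _ U (by rw [Finset.card_erase_of_mem hemp, hk]) ?_ ?_ ?_
    · intro A hA; exact hsub A (Finset.mem_of_mem_erase hA)
    · intro u hu
      obtain ⟨A, hA, huA⟩ := hcov u hu
      exact ⟨A, Finset.mem_erase.2 ⟨by rintro rfl; simp at huA, hA⟩, huA⟩
    · intro u hu v hv
      refine Relation.ReflTransGen.mono ?_ _ _ (hch u hu v hv)
      rintro x y ⟨A, hA, hx, hy⟩
      exact ⟨A, Finset.mem_erase.2 ⟨by rintro rfl; simp at hx, hA⟩, hx, hy⟩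
  · by_cases hpair : ∃ A ∈ 𝒜, ∃ B ∈ 𝒜, A ≠ B ∧ (A ∩ B).Nonempty
    · obtain ⟨A, hA, B, hB, hAB, hint⟩ := hpair
      set R : Finset (Finset α) := (𝒜.erase A).erase B with hR
      set 𝒜' : Finset (Finset α) := insert (A ∪ B) R with h𝒜'
      have hBR : B ∈ 𝒜.erase A := Finset.mem_erase.2 ⟨fun h => hAB h.symm, hB⟩
      have hk2 : 2 ≤ k := by
        rw [← hk]
        have : ({A, B} : Finset (Finset α)) ⊆ 𝒜 := by
          intro x hx; simp at hx; rcases hx with rfl | rfl <;> assumption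
        calc 2 = ({A, B} : Finset (Finset α)).card := by
                  rw [Finset.card_insert_of_notMem (by simpa using hAB), Finset.card_singleton]
          _ ≤ 𝒜.card := Finset.card_le_card this
      have hRcard : R.card = k - 2 := by
        rw [hR, Finset.card_erase_of_mem hBR, Finset.card_erase_of_mem hA, hk]; omega
      have hcard' : 𝒜'.card < k := by
        calc 𝒜'.card ≤ R.card + 1 := Finset.card_insert_le _ _
          _ < k := by omega
      have hmain : U.card - 1 ≤ ∑ C ∈ 𝒜', (C.card - 1) := by
        refine ih 𝒜'.card hcard' _ U rfl ?_ ?_ ?_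
        · intro C hC
          rcases Finset.mem_insert.1 hC with rfl | hC
          · exact Finset.union_subset (hsub A hA) (hsub B hB)
          · exact hsub C (Finset.mem_of_mem_erase (Finset.mem_of_mem_erase hC))
        · intro u hu
          obtain ⟨C, hC, huC⟩ := hcov u hu
          by_cases hCA : C = A
          · exact ⟨A ∪ B, Finset.mem_insert_self _ _, by subst hCA; exact Finset.mem_union_left _ huC⟩
          by_cases hCB : C = B
          · exact ⟨A ∪ B, Finset.mem_insert_self _ _, by subst hCB; exact Finset.mem_union_right _ huC⟩
          · exact ⟨C, Finset.mem_insert_of_mem (Finset.mem_erase.2 ⟨hCB, Finset.mem_erase.2 ⟨hCA, hC⟩⟩), huC⟩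
        · intro u hu v hv
          refine Relation.ReflTransGen.mono ?_ _ _ (hch u hu v hv)
          rintro x y ⟨C, hC, hx, hy⟩
          by_cases hCA : C = A
          · exact ⟨A ∪ B, Finset.mem_insert_self _ _, by subst hCA; exact ⟨Finset.mem_union_left _ hx, Finset.mem_union_left _ hy⟩⟩
          by_cases hCB : C = B
          · exact ⟨A ∪ B, Finset.mem_insert_self _ _, by subst hCB; exact ⟨Finset.mem_union_right _ hx, Finset.mem_union_right _ hy⟩⟩
          · exact ⟨C, Finset.mem_insert_of_mem (Finset.mem_erase.2 ⟨hCB, Finset.mem_erase.2 ⟨hCA, hC⟩⟩), hx, hy⟩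
      refine hmain.trans ?_
      have hAne : A.Nonempty := ⟨hint.choose, (Finset.mem_inter.1 hint.choose_spec).1⟩
      have hBne : B.Nonempty := ⟨hint.choose, (Finset.mem_inter.1 hint.choose_spec).2⟩
      have hunion : (A ∪ B).card - 1 ≤ (A.card - 1) + (B.card - 1) := by
        have h1 := Finset.card_union_add_card_inter A B
        have h2 : 1 ≤ (A ∩ B).card := Finset.card_pos.2 hint
        have h3 : 1 ≤ A.card := Finset.card_pos.2 hAne
        have h4 : 1 ≤ B.card := Finset.card_pos.2 hBne
        omega
      have hsplit : ∑ C ∈ 𝒜, (C.card - 1) =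
          (A.card - 1) + ((B.card - 1) + ∑ C ∈ R, (C.card - 1)) := by
        rw [hR, ← Finset.add_sum_erase _ _ hA, ← Finset.add_sum_erase _ _ hBR]
      have hins : ∑ C ∈ 𝒜', (C.card - 1) ≤ ((A ∪ B).card - 1) + ∑ C ∈ R, (C.card - 1) := by
        by_cases hmem : (A ∪ B) ∈ R
        · rw [h𝒜', Finset.insert_eq_self.2 hmem]; omega
        · rw [h𝒜', Finset.sum_insert hmem]
      rw [hsplit]; omega
    · rcases Finset.eq_empty_or_nonempty U with rfl | ⟨u0, hu0⟩
      · simp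
      obtain ⟨A0, hA0, hu0A⟩ := hcov u0 hu0
      have hUsub : U ⊆ A0 := by
        intro v hv
        have hchain := hch u0 hu0 v hv
        clear hv
        induction hchain with
        | refl => exact hu0A
        | tail hxy hstep ih2 =>
            obtain ⟨C, hC, hx, hy⟩ := hstep
            have hx0 := ih2
            have : C = A0 := by
              by_contra hne
              exact hpair ⟨C, hC, A0, hA0, hne, ⟨_, Finset.mem_inter.2 ⟨hx, hx0⟩⟩⟩
            subst this; exact hy
      calc U.card - 1 ≤ A0.card - 1 := by
              have := Finset.card_le_card hUsub; omega
        _ ≤ ∑ A ∈ 𝒜, (A.card - 1) :=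
              Finset.single_le_sum (f := fun A => A.card - 1) (fun _ _ => Nat.zero_le _) hA0

lemma sum_image_le_nat {α β : Type*} [DecidableEq β] (s : Finset α) (f : α → β) (g : β → ℕ) :
    ∑ b ∈ s.image f, g b ≤ ∑ a ∈ s, g (f a) := by
  classical
  induction s using Finset.induction_on with
  | empty => simp
  | insert a s hx ih =>
      rw [Finset.image_insert, Finset.sum_insert hx]
      by_cases h : f a ∈ s.image f
      · rw [Finset.insert_eq_self.2 h]; omega
      · rw [Finset.sum_insert h]; omega

lemma compat_head_iff {T : Set (Sym2 (Sym2 V))} {a : V} {l : List V} :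
    Compat T (a :: l) ↔ Compat T l ∧
      (∀ b c m, l = b :: c :: m → (a = c ∨ transitionOf a b c ∈ T)) := by
  constructor
  · intro h
    refine ⟨compat_tail h, ?_⟩
    rintro b c m rfl
    cases h with
    | cons _ _ _ _ hx _ => exact hx
  · rintro ⟨h1, h2⟩
    match l with
    | [] => exact Compat.single a
    | [b] => exact Compat.pair a b
    | b :: c :: m => exact Compat.cons a b c m (h2 b c m rfl) h1

lemma compat_overlap_append {T : Set (Sym2 (Sym2 V))} :
    ∀ (l : List V) (x j : V) (m : List V), Compat T (l ++ [x, j]) →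
      Compat T (x :: j :: m) → Compat T (l ++ x :: j :: m) := by
  intro l
  induction l with
  | nil => intro x j m _ h2; exact h2
  | cons a l' ih =>
      intro x j m h1 h2
      rw [List.cons_append] at h1 ⊢
      rw [compat_head_iff] at h1 ⊢
      refine ⟨ih x j m h1.1 h2, ?_⟩
      intro b c m' hm
      rcases l' with _ | ⟨b'', l''⟩
      · simp only [List.nil_append] at hm
        injection hm with e1 hm
        injection hm with e2 hm
        subst e1; subst e2
        exact h1.2 _ _ [] rfl
      · rcases l'' with _ | ⟨c'', l'''⟩
        · simp only [List.cons_append, List.nil_append] at hm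
          injection hm with e1 hm
          injection hm with e2 hm
          subst e1; subst e2
          exact h1.2 _ _ [j] rfl
        · simp only [List.cons_append] at hm
          injection hm with e1 hm
          injection hm with e2 hm
          subst e1; subst e2
          exact h1.2 _ _ (l''' ++ [x, j]) (by simp)

lemma compat_reverse {T : Set (Sym2 (Sym2 V))} {l : List V} (h : Compat T l) :
    Compat T l.reverse := by
  rw [compat_iff] at h ⊢
  intro i hi
  have hL : i + 2 < l.length := by simpa using hi
  have hj : (l.length - 3 - i) + 2 < l.length := by omega
  have := h (l.length - 3 - i) hj
  have e0 : l.reverse[i]'(by omega) = l[l.length - 1 - i]'(by omega) := by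
    rw [List.getElem_reverse]
  have e1 : l.reverse[i+1]'(by omega) = l[l.length - 2 - i]'(by omega) := by
    rw [List.getElem_reverse]; congr 1; omega
  have e2 : l.reverse[i+2]'hi = l[l.length - 3 - i]'(by omega) := by
    rw [List.getElem_reverse]; congr 1; omega
  have e3 : l.length - 3 - i + 1 = l.length - 2 - i := by omega
  have e4 : l.length - 3 - i + 2 = l.length - 1 - i := by omega
  have e5 : l[l.length - 3 - i + 2]'(by omega) = l[l.length - 1 - i]'(by omega) := by
    congr 1
  have e6 : l[l.length - 3 - i + 1]'(by omega) = l[l.length - 2 - i]'(by omega) := by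
    congr 1
  rcases this with heq | ht
  · left
    rw [e0, e2]
    exact (heq.trans e5).symm
  · right
    rw [e0, e1, e2, transitionOf_comm]
    rw [e5, e6] at ht
    exact ht

lemma chain_to_walk (G : SimpleGraph V) :
    ∀ (l : List V) (u w : V), List.Chain' G.Adj l → l.head? = some u →
      l.getLast? = some w → ∃ p : G.Walk u w, p.support = l := by
  intro l
  induction l with
  | nil => intro u w _ h; simp at h
  | cons a l' ih =>
      intro u w hch hh hl
      have hau : a = u := by simpa using hh
      subst hau
      match l', hl with
      | [], hl =>
          have : a = w := by simpa using hl
          subst this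
          exact ⟨SimpleGraph.Walk.nil, by simp⟩
      | b :: m, hl =>
          have hadj : G.Adj a b := (List.isChain_cons_cons.1 hch).1
          obtain ⟨q, hq⟩ := ih b w (List.isChain_cons_cons.1 hch).2 rfl (by
            rw [← hl]; exact (List.getLast?_cons_cons ..).symm)
          exact ⟨SimpleGraph.Walk.cons hadj q, by simp [hq]⟩

lemma two_mem_sym2 {x : Sym2 V} {a b : V} (ha : a ∈ x) (hb : b ∈ x) (hab : a ≠ b) :
    x = s(a, b) := by
  induction x with
  | _ u v =>
    rw [Sym2.mem_iff] at ha hb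
    rcases ha with rfl | rfl <;> rcases hb with rfl | rfl <;>
      first | exact absurd rfl hab | rfl | rw [Sym2.eq_swap]

lemma lower_bound {V : Type*} [Fintype V] [DecidableEq V] (G : SimpleGraph V)
    (hc : G.Connected) (p : V) (hp : ¬(G.induce {v : V | v ≠ p}).Connected)
    (T : Finset (Sym2 (Sym2 V))) (hT : G.ConnectingTransitionSet T) :
    Fintype.card V - 2 ≤ T.card := by
  classical
  set S : Set V := {v : V | v ≠ p} with hS
  set GI := G.induce S with hGI
  -- the step relation on edges
  set step : Sym2 V → Sym2 V → Prop := fun e f => s(e, f) ∈ T with hstepdef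
  have hstep_struct : ∀ e f, step e f →
      e ∈ G.edgeSet ∧ f ∈ G.edgeSet ∧ ∃ m, m ∈ e ∧ m ∈ f := by
    intro e f hef
    obtain ⟨a, b, c, hab, hbc, hac, ht⟩ := hT.1 _ hef
    rw [transitionOf] at ht
    rw [Sym2.eq_iff] at ht
    rcases ht with ⟨rfl, rfl⟩ | ⟨rfl, rfl⟩
    · exact ⟨hab, hbc, b, by simp, by simp⟩
    · exact ⟨hbc, hab, b, by simp, by simp⟩
  have hstep_symm : Symmetric step := by
    intro e f h
    simpa [hstepdef, Sym2.eq_swap] using h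
  set Eqv : Sym2 V → Sym2 V → Prop := Relation.ReflTransGen step with hEqvdef
  have hEqv_symm : Symmetric Eqv := fun _ _ h => (@Relation.ReflTransGen.stdSymm _ _ ⟨fun a b h => hstep_symm h⟩).symm _ _ h
  have hEqv_trans : Transitive Eqv := fun _ _ _ h1 h2 => h1.trans h2
  set E : Finset (Sym2 V) := Finset.univ.filter (fun e => e ∈ G.edgeSet) with hE
  set cls : Sym2 V → Finset (Sym2 V) := fun e => E.filter (fun f => Eqv e f) with hcls
  have hcls_self : ∀ e ∈ E, e ∈ cls e := by
    intro e he; rw [hcls]; exact Finset.mem_filter.2 ⟨he, Relation.ReflTransGen.refl⟩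
  have hcls_eq : ∀ e f, Eqv e f → cls e = cls f := by
    intro e f hef
    rw [hcls]
    ext g
    simp only [Finset.mem_filter]
    exact ⟨fun ⟨hg, h⟩ => ⟨hg, hEqv_trans (hEqv_symm hef) h⟩,
      fun ⟨hg, h⟩ => ⟨hg, hEqv_trans hef h⟩⟩
  have hcls_mem : ∀ e f, f ∈ cls e → Eqv e f ∧ f ∈ E := by
    intro e f h; rw [hcls] at h; exact ⟨(Finset.mem_filter.1 h).2, (Finset.mem_filter.1 h).1⟩
  have hcls_closed : ∀ e f g, f ∈ cls e → step f g → g ∈ cls e := by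
    intro e f g hf hfg
    rw [hcls]
    refine Finset.mem_filter.2 ⟨?_, (hcls_mem e f hf).1.tail hfg⟩
    rw [hE]
    exact Finset.mem_filter.2 ⟨Finset.mem_univ _, (hstep_struct f g hfg).2.1⟩
  set verts : Finset (Sym2 V) → Finset V := fun D => Finset.univ.filter (fun v => ∃ e ∈ D, v ∈ e)
    with hverts
  set insideT : Finset (Sym2 V) → Finset (Sym2 (Sym2 V)) :=
    fun D => T.filter (fun t => ∀ e ∈ t, e ∈ D) with hinsideT
  set pf : Sym2 (Sym2 V) → Finset (Sym2 V) := fun t => Finset.univ.filter (fun e => e ∈ t)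
    with hpf
  set vf : Sym2 V → Finset V := fun g => Finset.univ.filter (fun v => v ∈ g) with hvf
  have hpf_eq : ∀ x y : Sym2 V, pf s(x, y) = {x, y} := by
    intro x y
    rw [hpf]; ext e
    simp [Sym2.mem_iff]
  have hvf_eq : ∀ x y : V, vf s(x, y) = {x, y} := by
    intro x y
    rw [hvf]; ext v
    simp [Sym2.mem_iff]
  have hpf_card : ∀ t, (pf t).card ≤ 2 := by
    intro t
    induction t with
    | _ x y => rw [hpf_eq]; exact (Finset.card_insert_le _ _).trans (by simp)
  have hvf_card : ∀ g, (vf g).card ≤ 2 := by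
    intro g
    induction g with
    | _ x y => rw [hvf_eq]; exact (Finset.card_insert_le _ _).trans (by simp)
  -- (b) : class size ≤ transitions inside + 1
  have hb : ∀ e ∈ E, (cls e).card - 1 ≤ (insideT (cls e)).card := by
    intro e he
    by_cases hsmall : (cls e).card ≤ 1
    · omega
    push_neg at hsmall
    have key := cover_sum_bound ((insideT (cls e)).image pf).card
      ((insideT (cls e)).image pf) (cls e) rfl ?_ ?_ ?_
    · refine key.trans ?_
      refine (sum_image_le_nat _ _ _).trans ?_
      calc ∑ t ∈ insideT (cls e), ((pf t).card - 1)
          ≤ ∑ _t ∈ insideT (cls e), 1 :=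
            Finset.sum_le_sum (fun t _ => by have := hpf_card t; omega)
        _ = (insideT (cls e)).card := by simp
    · -- hsub
      intro A hA
      obtain ⟨t, ht, rfl⟩ := Finset.mem_image.1 hA
      intro g hg
      rw [hpf] at hg
      have := (Finset.mem_filter.1 ht).2
      exact this g (Finset.mem_filter.1 hg).2
    · -- hcov
      intro g hg
      obtain ⟨g', hg', hne⟩ : ∃ g' ∈ cls e, g' ≠ g := by
        by_contra hcon
        push_neg at hcon
        have : cls e ⊆ {g} := fun x hx => Finset.mem_singleton.2 (hcon x hx)
        have := Finset.card_le_card this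
        simp at this; omega
      have hEgg : Eqv g g' := hEqv_trans (hEqv_symm (hcls_mem e g hg).1) (hcls_mem e g' hg').1
      obtain ⟨h, hgh, -⟩ := Relation.ReflTransGen.cases_head hEgg |>.resolve_left (by
        intro h; exact hne h.symm)
      refine ⟨pf s(g, h), Finset.mem_image_of_mem _ ?_, ?_⟩
      · rw [hinsideT]
        refine Finset.mem_filter.2 ⟨hgh, ?_⟩
        intro e' he'
        rw [Sym2.mem_iff] at he'
        rcases he' with rfl | rfl
        · exact hg
        · exact hcls_closed e g e' hg hgh
      · rw [hpf_eq]; simp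
    · -- hchain
      intro x hx y hy
      have hExy : Eqv x y := hEqv_trans (hEqv_symm (hcls_mem e x hx).1) (hcls_mem e y hy).1
      have main : ∀ x' z, Relation.ReflTransGen step x' z → x' ∈ cls e →
          z ∈ cls e ∧ Relation.ReflTransGen
            (fun a b => ∃ A ∈ (insideT (cls e)).image pf, a ∈ A ∧ b ∈ A) x' z := by
        intro x' z hz hxcls
        induction hz with
        | refl => exact ⟨hxcls, Relation.ReflTransGen.refl⟩
        | @tail z' z hxz hstep ih =>
            obtain ⟨hz'cls, hrel⟩ := ih
            have hzcls : z ∈ cls e := hcls_closed e z' z hz'cls hstep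
            refine ⟨hzcls, hrel.tail ?_⟩
            refine ⟨pf s(z', z), Finset.mem_image_of_mem _ ?_, ?_, ?_⟩
            · rw [hinsideT]
              refine Finset.mem_filter.2 ⟨hstep, ?_⟩
              intro e' he'
              rw [Sym2.mem_iff] at he'
              rcases he' with rfl | rfl
              · exact hz'cls
              · exact hzcls
            · rw [hpf_eq]; simp
            · rw [hpf_eq]; simp
      exact (main x y hExy hx).2
  -- (c) : vertex span of a class ≤ class size + 1
  have hcv : ∀ e ∈ E, (verts (cls e)).card ≤ (cls e).card + 1 := by
    intro e he
    have key := cover_sum_bound ((cls e).image vf).card ((cls e).image vf)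
      (verts (cls e)) rfl ?_ ?_ ?_
    · have h2 : ∑ A ∈ (cls e).image vf, (A.card - 1) ≤ (cls e).card := by
        refine (sum_image_le_nat _ _ _).trans ?_
        calc ∑ g ∈ cls e, ((vf g).card - 1) ≤ ∑ _g ∈ cls e, 1 :=
              Finset.sum_le_sum (fun g _ => by have := hvf_card g; omega)
          _ = (cls e).card := by simp
      omega
    · -- hsub
      intro A hA
      obtain ⟨g, hg, rfl⟩ := Finset.mem_image.1 hA
      intro v hv
      rw [hverts]
      exact Finset.mem_filter.2 ⟨Finset.mem_univ _, g, hg, (Finset.mem_filter.1 hv).2⟩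
    · -- hcov
      intro v hv
      rw [hverts] at hv
      obtain ⟨g, hg, hvg⟩ := (Finset.mem_filter.1 hv).2
      exact ⟨vf g, Finset.mem_image_of_mem _ hg, by rw [hvf]; simp [hvg]⟩
    · -- hchain
      intro a ha b hb
      rw [hverts] at ha hb
      obtain ⟨g1, hg1, hag⟩ := (Finset.mem_filter.1 ha).2
      obtain ⟨g2, hg2, hbg⟩ := (Finset.mem_filter.1 hb).2
      set Rel : V → V → Prop :=
        fun a b => ∃ A ∈ (cls e).image vf, a ∈ A ∧ b ∈ A with hReldef
      have hsame : ∀ g ∈ cls e, ∀ a' ∈ g, ∀ b' ∈ g, Relation.ReflTransGen Rel a' b' := by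
        intro g hg a' ha' b' hb'
        refine Relation.ReflTransGen.single ?_
        refine ⟨vf g, Finset.mem_image_of_mem _ hg, ?_, ?_⟩ <;>
          · rw [hvf]; simp only [Finset.mem_filter, Finset.mem_univ, true_and]; assumption
      have main : ∀ g g', Relation.ReflTransGen step g g' → g ∈ cls e → a ∈ g →
          g' ∈ cls e ∧ ∀ b' ∈ g', Relation.ReflTransGen Rel a b' := by
        intro g g' hgg' hgcls hag
        induction hgg' with
        | refl => exact ⟨hgcls, fun b' hb' => hsame g hgcls a hag b' hb'⟩
        | @tail z' z hxz hstep ih =>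
            obtain ⟨hz'cls, hrel⟩ := ih
            have hzcls : z ∈ cls e := hcls_closed e z' z hz'cls hstep
            obtain ⟨-, -, m, hm1, hm2⟩ := hstep_struct z' z hstep
            refine ⟨hzcls, fun b' hb' => ?_⟩
            exact (hrel m hm1).trans (hsame z hzcls m hm2 b' hb')
      have hEg12 : Eqv g1 g2 :=
        hEqv_trans (hEqv_symm (hcls_mem e g1 hg1).1) (hcls_mem e g2 hg2).1
      exact (main g1 g2 hEg12 hg1 hag).2 b hbg
  -- reachability helpers in G - p
  have hadj_reach : ∀ (u v : ↑S), G.Adj ↑u ↑v → GI.Reachable u v := by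
    intro u v huv
    refine SimpleGraph.Adj.reachable ?_
    rw [hGI]
    exact huv
  have hexists_far : ∀ u : ↑S, ∃ x : ↑S, ¬ GI.Reachable u x := by
    intro u
    by_contra hcon
    push_neg at hcon
    haveI : Nonempty ↑S := ⟨u⟩
    refine hp ⟨fun a b => ?_⟩
    exact (hcon a).symm.trans (hcon b)
  -- key lemma: a compatible walk yields a chain of transitions
  have walkclass : ∀ (l : List V) (u b : V), List.Chain' G.Adj (u :: b :: l) →
      Compat (↑T) (u :: b :: l) → ∃ f ∈ G.edgeSet,
        (u :: b :: l).getLast (by simp) ∈ f ∧ Relation.ReflTransGen step s(u, b) f := by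
    intro l
    induction l with
    | nil =>
        intro u b hch _
        exact ⟨s(u, b), (List.isChain_cons_cons.1 hch).1, by simp, Relation.ReflTransGen.refl⟩
    | cons c m ih =>
        intro u b hch hcomp
        have hch' : List.Chain' G.Adj (b :: c :: m) := (List.isChain_cons_cons.1 hch).2
        have hcomp' : Compat (↑T) (b :: c :: m) := compat_tail hcomp
        obtain ⟨f, hf, hlast, hrtg⟩ := ih b c hch' hcomp'
        have hlast' : (u :: b :: c :: m).getLast (by simp) = (b :: c :: m).getLast (by simp) := by
          simp [List.getLast]
        cases hcomp with
        | cons _ _ _ _ h _ =>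
            rcases h with rfl | ht
            · refine ⟨f, hf, by rw [hlast']; exact hlast, ?_⟩
              rw [show s(u, b) = s(b, u) from Sym2.eq_swap]
              exact hrtg
            · refine ⟨f, hf, by rw [hlast']; exact hlast, ?_⟩
              refine Relation.ReflTransGen.trans (Relation.ReflTransGen.single ?_) hrtg
              rw [hstepdef]
              simpa [transitionOf] using ht
  -- key lemma : nonreachable pairs in G - p give classes through p
  have key_class : ∀ (u x : ↑S), ¬ GI.Reachable u x → ∃ e ∈ E, (↑u : V) ∈ e ∧
      (↑x : V) ∈ verts (cls e) ∧ p ∈ verts (cls e) := by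
    intro u x hnr
    have hux : (↑u : V) ≠ ↑x := by
      rintro h
      exact hnr (by rw [Subtype.ext h])
    have hnadj : ¬ G.Adj ↑u ↑x := fun h => hnr (hadj_reach u x h)
    obtain ⟨w, hw⟩ := hT.2 ↑u ↑x
    have hchain := w.isChain_adj_support
    have hcompat : Compat (↑T) w.support := (compat_iff _).2 hw
    have hsupp : w.support.getLast (SimpleGraph.Walk.support_ne_nil w) = ↑x :=
      w.getLast_support
    have hsupp' : w.support.getLast? = some (↑x : V) := by
      rw [List.getLast?_eq_getLast (SimpleGraph.Walk.support_ne_nil w), hsupp]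
    obtain ⟨b, l, hbl⟩ : ∃ b l, w.support = (↑u : V) :: b :: l := by
      have h1 := w.support_eq_cons
      cases htl : w.support.tail with
      | nil =>
          rw [htl] at h1
          have hlen := w.length_support
          rw [h1] at hlen
          simp at hlen
          have := w.eq_of_length_eq_zero (by simpa using hlen)
          exact absurd this hux
      | cons b l => exact ⟨b, l, by rw [h1, htl]⟩
    rw [hbl] at hchain hcompat hsupp'
    have glast : ((↑u : V) :: b :: l).getLast (by simp) = ↑x := by
      rw [List.getLast?_eq_getLast (l := ((↑u : V) :: b :: l)) (by simp)] at hsupp'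
      exact Option.some_injective _ hsupp'
    obtain ⟨f, hf, hlast, hrtg⟩ := walkclass l (↑u) b hchain hcompat
    have he : s(↑u, b) ∈ E := by
      rw [hE]
      exact Finset.mem_filter.2 ⟨Finset.mem_univ _, (List.isChain_cons_cons.1 hchain).1⟩
    have hfcls : f ∈ cls s(↑u, b) := by
      rw [hcls]
      refine Finset.mem_filter.2 ⟨?_, hrtg⟩
      rw [hE]; exact Finset.mem_filter.2 ⟨Finset.mem_univ _, hf⟩
    have hxverts : (↑x : V) ∈ verts (cls s(↑u, b)) := by
      rw [hverts]
      refine Finset.mem_filter.2 ⟨Finset.mem_univ _, f, hfcls, ?_⟩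
      rw [← glast]; exact hlast
    refine ⟨s(↑u, b), he, by simp, hxverts, ?_⟩
    by_contra hnp
    -- then all vertices of the class avoid p, giving reachability in G - p
    have hnotp : ∀ g ∈ cls s(↑u, b), ∀ v ∈ g, v ≠ p := by
      intro g hg v hv hvp
      refine hnp ?_
      rw [hverts]
      exact Finset.mem_filter.2 ⟨Finset.mem_univ _, g, hg, hvp ▸ hv⟩
    have hedge_reach : ∀ g ∈ cls s(↑u, b), ∀ a ∈ g, ∀ b' ∈ g,
        ∀ (ha : a ≠ p) (hb : b' ≠ p), GI.Reachable ⟨a, ha⟩ ⟨b', hb⟩ := by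
      intro g hg a hag b' hbg ha hb
      by_cases hab : a = b'
      · subst hab; rfl
      · have hgedge : g ∈ G.edgeSet := by
          have := (hcls_mem _ g hg).2
          rw [hE] at this
          exact (Finset.mem_filter.1 this).2
        have : g = s(a, b') := two_mem_sym2 hag hbg hab
        rw [this] at hgedge
        exact hadj_reach ⟨a, ha⟩ ⟨b', hb⟩ hgedge
    have main2 : ∀ g g', Relation.ReflTransGen step g g' → g ∈ cls s(↑u, b) →
        g' ∈ cls s(↑u, b) ∧ ∀ a ∈ g, ∀ b' ∈ g', ∀ (ha : a ≠ p) (hb : b' ≠ p),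
          GI.Reachable ⟨a, ha⟩ ⟨b', hb⟩ := by
      intro g g' hgg' hgcls
      induction hgg' with
      | refl =>
          exact ⟨hgcls, fun a hag b' hbg ha hb2 => hedge_reach g hgcls a hag b' hbg ha hb2⟩
      | @tail z' z hxz hstep2 ih =>
          obtain ⟨hz'cls, ihr⟩ := ih
          have hzcls : z ∈ cls s(↑u, b) := hcls_closed _ z' z hz'cls hstep2
          refine ⟨hzcls, ?_⟩
          intro a hag b' hbg ha hb2
          obtain ⟨-, -, m, hm1, hm2⟩ := hstep_struct z' z hstep2
          have hmp : m ≠ p := hnotp z hzcls m hm2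
          exact (ihr a hag m hm1 ha hmp).trans (hedge_reach z hzcls m hm2 b' hbg hmp hb2)
    have hup : (↑u : V) ≠ p := u.2
    have hxp : (↑x : V) ≠ p := x.2
    have := (main2 s(↑u, b) f hrtg (hcls_self _ he)).2 ↑u (by simp) ↑x (by rw [← glast]; exact hlast)
      hup hxp
    exact hnr (by simpa using this)
  -- final assembly
  set classes : Finset (Finset (Sym2 V)) := E.image cls with hclasses
  set pclasses := classes.filter (fun D => p ∈ verts D) with hpclasses
  set 𝒜 := pclasses.image (fun D => (verts D).erase p) with h𝒜
  set U : Finset V := Finset.univ.erase p with hU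
  have hpclasses_mem : ∀ D, D ∈ pclasses → D ∈ classes ∧ p ∈ verts D := by
    intro D hD
    rw [hpclasses] at hD
    exact ⟨(Finset.mem_filter.1 hD).1, (Finset.mem_filter.1 hD).2⟩
  have hUcard : U.card = Fintype.card V - 1 := by
    rw [hU, Finset.card_erase_of_mem (Finset.mem_univ _), Finset.card_univ]
  have pairco : ∀ (u x : ↑S), ¬ GI.Reachable u x → ∃ D ∈ pclasses,
      (↑u : V) ∈ (verts D).erase p ∧ (↑x : V) ∈ (verts D).erase p := by
    intro u x hnr
    obtain ⟨e, he, hue, hxv, hpv⟩ := key_class u x hnr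
    refine ⟨cls e, ?_, ?_, ?_⟩
    · rw [hpclasses]
      exact Finset.mem_filter.2 ⟨by rw [hclasses]; exact Finset.mem_image_of_mem _ he, hpv⟩
    · refine Finset.mem_erase.2 ⟨u.2, ?_⟩
      rw [hverts]
      exact Finset.mem_filter.2 ⟨Finset.mem_univ _, e, hcls_self e he, hue⟩
    · exact Finset.mem_erase.2 ⟨x.2, hxv⟩
  have step1 := cover_sum_bound 𝒜.card 𝒜 U rfl ?_ ?_ ?_
  · -- chain together all the per-class bounds
    have step2 : ∑ A ∈ 𝒜, (A.card - 1) ≤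
        ∑ D ∈ pclasses, (((verts D).erase p).card - 1) := by
      rw [h𝒜]; exact sum_image_le_nat _ _ _
    have step3 : ∑ D ∈ pclasses, (((verts D).erase p).card - 1) ≤
        ∑ D ∈ pclasses, (insideT D).card := by
      refine Finset.sum_le_sum ?_
      intro D hD
      have hpD : p ∈ verts D := (hpclasses_mem D hD).2
      have hDcls : D ∈ classes := (hpclasses_mem D hD).1
      obtain ⟨e, heE, rfl⟩ := Finset.mem_image.1 (by rw [hclasses] at hDcls; exact hDcls)
      have h1 := hcv e heE
      have h2 := hb e heE
      rw [Finset.card_erase_of_mem hpD]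
      omega
    have step4 : ∑ D ∈ pclasses, (insideT D).card ≤ T.card := by
      have hdisj : ∀ D1 ∈ pclasses, ∀ D2 ∈ pclasses, D1 ≠ D2 →
          Disjoint (insideT D1) (insideT D2) := by
        intro D1 hD1 D2 hD2 hne
        rw [Finset.disjoint_left]
        intro t ht1 ht2
        obtain ⟨x, hx⟩ : ∃ x, x ∈ t := ⟨t.out.1, Sym2.out_fst_mem t⟩
        have hx1 : x ∈ D1 := (Finset.mem_filter.1 ht1).2 x hx
        have hx2 : x ∈ D2 := (Finset.mem_filter.1 ht2).2 x hx
        obtain ⟨e1, he1, rfl⟩ := Finset.mem_image.1 (by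
          have := (hpclasses_mem D1 hD1).1
          rw [hclasses] at this; exact this)
        obtain ⟨e2, he2, rfl⟩ := Finset.mem_image.1 (by
          have := (hpclasses_mem D2 hD2).1
          rw [hclasses] at this; exact this)
        exact hne (((hcls_eq e1 x (hcls_mem e1 x hx1).1)).trans
          ((hcls_eq e2 x (hcls_mem e2 x hx2).1)).symm)
      rw [← Finset.card_biUnion hdisj]
      refine Finset.card_le_card ?_
      intro t ht
      obtain ⟨D, -, htD⟩ := Finset.mem_biUnion.1 ht
      exact (Finset.mem_filter.1 htD).1
    omega
  · -- sub
    intro A hA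
    obtain ⟨D, -, rfl⟩ := Finset.mem_image.1 (by rw [h𝒜] at hA; exact hA)
    intro v hv
    rw [hU]
    exact Finset.mem_erase.2 ⟨(Finset.mem_erase.1 hv).1, Finset.mem_univ _⟩
  · -- cov
    intro v hv
    have hvp : v ≠ p := (Finset.mem_erase.1 (by rw [hU] at hv; exact hv)).1
    obtain ⟨x, hx⟩ := hexists_far ⟨v, hvp⟩
    obtain ⟨D, hD, hv1, -⟩ := pairco ⟨v, hvp⟩ x hx
    exact ⟨(verts D).erase p, by rw [h𝒜]; exact Finset.mem_image_of_mem _ hD, hv1⟩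
  · -- chain
    intro a ha b hb
    have hap : a ≠ p := (Finset.mem_erase.1 (by rw [hU] at ha; exact ha)).1
    have hbp : b ≠ p := (Finset.mem_erase.1 (by rw [hU] at hb; exact hb)).1
    by_cases hr : GI.Reachable ⟨a, hap⟩ ⟨b, hbp⟩
    · obtain ⟨x, hx⟩ := hexists_far ⟨a, hap⟩
      have hbx : ¬ GI.Reachable ⟨b, hbp⟩ x := fun h => hx (hr.trans h)
      obtain ⟨D1, hD1, ha1, hx1⟩ := pairco ⟨a, hap⟩ x hx
      obtain ⟨D2, hD2, hb2, hx2⟩ := pairco ⟨b, hbp⟩ x hbx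
      refine Relation.ReflTransGen.head
        ⟨(verts D1).erase p, by rw [h𝒜]; exact Finset.mem_image_of_mem _ hD1, ha1, hx1⟩ ?_
      exact Relation.ReflTransGen.single
        ⟨(verts D2).erase p, by rw [h𝒜]; exact Finset.mem_image_of_mem _ hD2, hx2, hb2⟩
    · obtain ⟨D, hD, ha1, hb1⟩ := pairco ⟨a, hap⟩ ⟨b, hbp⟩ hr
      exact Relation.ReflTransGen.single
        ⟨(verts D).erase p, by rw [h𝒜]; exact Finset.mem_image_of_mem _ hD, ha1, hb1⟩

lemma upper_bound {V : Type*} [Fintype V] [DecidableEq V] (G : SimpleGraph V)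
    (hc : G.Connected) (h2 : 2 ≤ Fintype.card V) :
    ∃ T : Finset (Sym2 (Sym2 V)), (∀ t ∈ T, G.IsTransition t) ∧ G.TConnected ↑T ∧
      T.card ≤ Fintype.card V - 2 := by
  classical
  letI : LinearOrder V := LinearOrder.lift' (fun v => (Fintype.equivFin V) v)
    (Equiv.injective _)
  obtain ⟨r⟩ := hc.nonempty
  -- parent function towards the root
  have hex : ∀ v : V, v ≠ r → ∃ w, G.Adj v w ∧ G.dist w r + 1 = G.dist v r := by
    intro v hv
    obtain ⟨q, hq⟩ := hc.exists_walk_length_eq_dist v r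
    have hpos : 0 < G.dist v r := hc.pos_dist_of_ne hv
    cases q with
    | nil => rw [← hq] at hpos; simp at hpos
    | @cons _ wv _ h q' =>
        refine ⟨wv, h, ?_⟩
        have h1 : G.dist wv r ≤ q'.length := SimpleGraph.dist_le q'
        have h3 : q'.length + 1 = G.dist v r := by simpa using hq
        have h4 : G.dist v wv ≤ 1 := by
          have := SimpleGraph.dist_le (SimpleGraph.Walk.cons h SimpleGraph.Walk.nil)
          simpa using this
        have h5 : G.dist v r ≤ G.dist v wv + G.dist wv r := hc.dist_triangle
        omega
  choose par0 hpar0 using hex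
  set par : V → V := fun v => if h : v = r then r else par0 v h with hpardef
  have hparr : par r = r := by rw [hpardef]; simp
  have hpar_adj : ∀ v (hv : v ≠ r), G.Adj v (par v) := by
    intro v hv
    rw [hpardef]; simp only [dif_neg hv]
    exact (hpar0 v hv).1
  have hpar_dist : ∀ v (hv : v ≠ r), G.dist (par v) r + 1 = G.dist v r := by
    intro v hv
    rw [hpardef]; simp only [dif_neg hv]
    exact (hpar0 v hv).2
  have hparne : ∀ v, v ≠ r → par v ≠ v := by
    intro v hv h
    have := hpar_dist v hv
    rw [h] at this
    omega
  set sadj : V → V → Prop := fun x y => x ≠ y ∧ (par x = y ∨ par y = x) with hsadjdef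
  have hsadj_symm : Symmetric sadj := by
    rintro x y ⟨h1, h2⟩
    exact ⟨h1.symm, h2.symm⟩
  have hsadj_adj : ∀ x y, sadj x y → G.Adj x y := by
    rintro x y ⟨h1, h2⟩
    rcases h2 with h2 | h2
    · have hx : x ≠ r := by rintro rfl; rw [hparr] at h2; exact h1 h2
      rw [← h2]; exact hpar_adj x hx
    · have hy : y ≠ r := by rintro rfl; rw [hparr] at h2; exact h1 h2.symm
      rw [← h2]; exact (hpar_adj y hy).symm
  have hsadj_par : ∀ v, v ≠ r → sadj v (par v) := fun v hv =>
    ⟨(hparne v hv).symm, Or.inl rfl⟩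
  set chl : V → Finset V := fun u => Finset.univ.filter (fun c => c ≠ r ∧ par c = u)
    with hchl
  set before : V → Finset V := fun c => (chl (par c)).filter (fun c' => c' < c) with hbefore
  set Dm : Finset V :=
    Finset.univ.filter (fun c => c ≠ r ∧ ¬(par c = r ∧ before c = ∅)) with hDm
  set prev : V → V := fun c =>
    if h : before c = ∅ then par (par c)
    else (before c).max' (Finset.nonempty_iff_ne_empty.2 h) with hprev
  set f : V → Sym2 (Sym2 V) := fun c => transitionOf (prev c) (par c) c with hf
  set T : Finset (Sym2 (Sym2 V)) := Dm.image f with hT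
  -- the children of the root
  have hchlr : (chl r).Nonempty := by
    obtain ⟨v, hv⟩ := Fintype.exists_ne_of_one_lt_card (by omega) r
    have main : ∀ k v, v ≠ r → G.dist v r = k → (chl r).Nonempty := by
      intro k
      induction k using Nat.strong_induction_on with
      | _ k ih =>
          intro v hvr hd
          by_cases hpr : par v = r
          · exact ⟨v, by rw [hchl]; exact Finset.mem_filter.2 ⟨Finset.mem_univ _, hvr, hpr⟩⟩
          · have hdlt := hpar_dist v hvr
            exact ih (G.dist (par v) r) (by omega) (par v) hpr rfl
    exact main _ v hv rfl
  set m0 : V := (chl r).min' hchlr with hm0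
  have hm0r : m0 ≠ r := by
    have : m0 ∈ chl r := (chl r).min'_mem hchlr
    rw [hchl] at this
    exact (Finset.mem_filter.1 this).2.1
  have hDcard : Dm.card ≤ Fintype.card V - 2 := by
    have hsub : Dm ⊆ (Finset.univ.erase r).erase m0 := by
      intro c hcD
      rw [hDm] at hcD
      obtain ⟨-, hcr, hcnot⟩ := Finset.mem_filter.1 hcD
      refine Finset.mem_erase.2 ⟨?_, Finset.mem_erase.2 ⟨hcr, Finset.mem_univ _⟩⟩
      rintro rfl
      have hparc : par m0 = r := by
        have : m0 ∈ chl r := (chl r).min'_mem hchlr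
        rw [hchl] at this
        exact (Finset.mem_filter.1 this).2.2
      refine hcnot ⟨hparc, ?_⟩
      · rw [hbefore]
        rw [Finset.filter_eq_empty_iff]
        intro x hx
        rw [hparc] at hx
        exact not_lt.2 (by rw [hm0]; exact (chl r).min'_le x hx)
    calc Dm.card ≤ ((Finset.univ.erase r).erase m0).card := Finset.card_le_card hsub
      _ = Fintype.card V - 2 := by
          rw [Finset.card_erase_of_mem (Finset.mem_erase.2 ⟨hm0r, Finset.mem_univ _⟩),
            Finset.card_erase_of_mem (Finset.mem_univ _), Finset.card_univ]
          omega
  -- basic facts about members of Dm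
  have hDm_mem : ∀ c, c ∈ Dm → c ≠ r ∧ ¬(par c = r ∧ before c = ∅) := by
    intro c hcD
    rw [hDm] at hcD
    exact (Finset.mem_filter.1 hcD).2
  have hchl_mem : ∀ u c, c ∈ chl u → c ≠ r ∧ par c = u := by
    intro u c hcu
    rw [hchl] at hcu
    exact (Finset.mem_filter.1 hcu).2
  have hprev_sadj : ∀ c, c ∈ Dm → sadj (prev c) (par c) ∧ prev c ≠ c := by
    intro c hcD
    obtain ⟨hcr, hcnot⟩ := hDm_mem c hcD
    by_cases hb : before c = ∅
    · have hur : par c ≠ r := fun h => hcnot ⟨h, hb⟩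
      have hprevc : prev c = par (par c) := by rw [hprev]; simp [hb]
      constructor
      · rw [hprevc]
        exact hsadj_symm (hsadj_par (par c) hur)
      · rw [hprevc]
        intro h
        have h1 := hpar_dist c hcr
        have h2 := hpar_dist (par c) hur
        rw [h] at h2
        omega
    · have hprevc : prev c = (before c).max' (Finset.nonempty_iff_ne_empty.2 hb) := by
        rw [hprev]; simp [hb]
      have hmem : prev c ∈ before c := by
        rw [hprevc]; exact (before c).max'_mem _
      rw [hbefore] at hmem
      obtain ⟨hmem1, hmem2⟩ := Finset.mem_filter.1 hmem
      obtain ⟨hpr, hpp⟩ := hchl_mem _ _ hmem1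
      constructor
      · exact ⟨fun h => (hparne (prev c) hpr) (hpp.symm ▸ h ▸ rfl), Or.inl hpp⟩
      · exact ne_of_lt hmem2
  have htrans : ∀ t ∈ T, G.IsTransition t := by
    intro t ht
    rw [hT] at ht
    obtain ⟨c, hcD, rfl⟩ := Finset.mem_image.1 ht
    obtain ⟨hs, hne⟩ := hprev_sadj c hcD
    obtain ⟨hcr, -⟩ := hDm_mem c hcD
    exact ⟨prev c, par c, c, hsadj_adj _ _ hs, (hpar_adj c hcr).symm, hne, rfl⟩
  -- the local step relation at a vertex
  set stp : V → V → V → Prop :=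
    fun u x y => sadj x u ∧ sadj y u ∧ transitionOf x u y ∈ T with hstp
  have hstp_symm : ∀ u, Symmetric (stp u) := by
    rintro u x y ⟨h1, h2, h3⟩
    exact ⟨h2, h1, by rwa [transitionOf_comm]⟩
  have hchl_sadj : ∀ u c, c ∈ chl u → sadj c u := by
    intro u c hcu
    obtain ⟨hcr, hpc⟩ := hchl_mem u c hcu
    exact ⟨fun h => (hparne c hcr) (hpc.symm ▸ h ▸ rfl), Or.inl hpc⟩
  have hkey : ∀ u k c, c ∈ chl u → (before c).card = k →
      Relation.ReflTransGen (stp u) (if u = r then m0 else par u) c := by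
    intro u k
    induction k using Nat.strong_induction_on with
    | _ k ih =>
        intro c hcu hck
        obtain ⟨hcr, hpc⟩ := hchl_mem u c hcu
        by_cases hb : before c = ∅
        · by_cases hur : u = r
          · subst hur
            have hcm0 : c = m0 := by
              have h1 : m0 ≤ c := by rw [hm0]; exact (chl u).min'_le c hcu
              rcases lt_or_eq_of_le h1 with hlt | heq
              · exfalso
                have : m0 ∈ before c := by
                  simp only [hbefore]
                  rw [hpc]
                  exact Finset.mem_filter.2 ⟨(by rw [hm0]; exact (chl u).min'_mem hchlr), hlt⟩
                rw [hb] at this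
                simp at this
              · exact heq.symm
            rw [if_pos rfl, hcm0]
          · rw [if_neg hur]
            refine Relation.ReflTransGen.single ?_
            refine ⟨hsadj_symm (hsadj_par u hur), hchl_sadj u c hcu, ?_⟩
            have hcD : c ∈ Dm := by
              rw [hDm]
              refine Finset.mem_filter.2 ⟨Finset.mem_univ _, hcr, ?_⟩
              rintro ⟨hh, -⟩
              exact hur (hpc ▸ hh)
            have : transitionOf (par u) u c = f c := by
              rw [hf, hprev]
              simp only [hb, dif_pos]
              rw [hpc]
            rw [this, hT]
            exact Finset.mem_image_of_mem _ hcD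
        · set a := (before c).max' (Finset.nonempty_iff_ne_empty.2 hb) with ha
          have hamem : a ∈ before c := by rw [ha]; exact (before c).max'_mem _
          rw [hbefore] at hamem
          obtain ⟨hamem1, haltc⟩ := Finset.mem_filter.1 hamem
          rw [hpc] at hamem1
          have hstep : stp u a c := by
            refine ⟨hchl_sadj u a hamem1, hchl_sadj u c hcu, ?_⟩
            have hcD : c ∈ Dm := by
              rw [hDm]
              refine Finset.mem_filter.2 ⟨Finset.mem_univ _, hcr, ?_⟩
              rintro ⟨-, hbe⟩
              exact hb hbe
            have : transitionOf a u c = f c := by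
              rw [hf, hprev]
              simp only [hb, dif_neg, not_false_iff]
              rw [hpc, ha]
            rw [this, hT]
            exact Finset.mem_image_of_mem _ hcD
          have hsubset : before a ⊂ before c := by
            constructor
            · intro x hx
              simp only [hbefore] at hx ⊢
              obtain ⟨hx1, hx2⟩ := Finset.mem_filter.1 hx
              have hpa : par a = u := (hchl_mem u a hamem1).2
              rw [hpa] at hx1
              rw [hpc]
              exact Finset.mem_filter.2 ⟨hx1, hx2.trans haltc⟩
            · intro hsup
              have han : a ∈ before a := hsup (by
                simp only [hbefore]
                rw [hpc]
                exact Finset.mem_filter.2 ⟨hamem1, haltc⟩)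
              simp only [hbefore] at han
              exact absurd (Finset.mem_filter.1 han).2 (lt_irrefl a)
          have hcard : (before a).card < k := hck ▸ Finset.card_lt_card hsubset
          exact (ih (before a).card hcard a hamem1 rfl).tail hstep
  have hloc : ∀ u x y, sadj x u → sadj y u → Relation.ReflTransGen (stp u) x y := by
    have hanchor : ∀ u x, sadj x u →
        Relation.ReflTransGen (stp u) (if u = r then m0 else par u) x := by
      intro u x hxu
      obtain ⟨hxnu, hpxu | hpux⟩ := hxu
      · have hxr : x ≠ r := by
          rintro rfl
          rw [hparr] at hpxu
          exact hxnu hpxu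
        exact hkey u _ x (by rw [hchl]; exact Finset.mem_filter.2 ⟨Finset.mem_univ _, hxr, hpxu⟩) rfl
      · have hur : u ≠ r := by
          rintro rfl
          rw [hparr] at hpux
          exact hxnu hpux.symm
        rw [if_neg hur, hpux]
    intro u x y hx hy
    have h1 := hanchor u x hx
    have h2 := hanchor u y hy
    exact ((@Relation.ReflTransGen.stdSymm _ _ ⟨fun a b h => hstp_symm u h⟩).symm _ _ h1).trans h2
  -- prepending a vertex to a compatible walk, with detours
  have P1 : ∀ (u x y : V) (rest : List V), Relation.ReflTransGen (stp u) x y →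
      Compat (↑T) (u :: y :: rest) → List.Chain' sadj (u :: y :: rest) →
      ∃ m : List V, Compat (↑T) (x :: u :: m) ∧ List.Chain' sadj (x :: u :: m) ∧
        (x :: u :: m).getLast (by simp) = (u :: y :: rest).getLast (by simp) := by
    intro u x y rest hrtg hcomp hch
    induction hrtg using Relation.ReflTransGen.head_induction_on with
    | refl =>
        refine ⟨y :: rest, ?_, ?_, ?_⟩
        · exact Compat.cons y u y rest (Or.inl rfl) hcomp
        · exact List.isChain_cons_cons.2 ⟨hsadj_symm (List.isChain_cons_cons.1 hch).1, hch⟩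
        · simp [List.getLast]
    | head hstep hrtg' ih =>
        rename_i x' z
        obtain ⟨m, hcm, hchm, hlm⟩ := ih
        refine ⟨z :: u :: m, ?_, ?_, ?_⟩
        · refine Compat.cons x' u z (u :: m) (Or.inr ?_) ?_
          · exact Finset.mem_coe.2 hstep.2.2
          · exact Compat.cons u z u m (Or.inl rfl) hcm
        · refine List.isChain_cons_cons.2 ⟨hstep.1, ?_⟩
          exact List.isChain_cons_cons.2 ⟨hsadj_symm hstep.2.1, hchm⟩
        · rw [← hlm]
          simp [List.getLast]
  -- walks to the root
  have P2 : ∀ k v, G.dist v r = k → ∃ m : List V, Compat (↑T) (v :: m) ∧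
      List.Chain' sadj (v :: m) ∧ (v :: m).getLast (by simp) = r ∧
      (m = [] ∨ ∃ m', m = par v :: m') := by
    intro k
    induction k using Nat.strong_induction_on with
    | _ k ih =>
        intro v hd
        by_cases hv : v = r
        · subst hv
          exact ⟨[], Compat.single v, List.isChain_singleton v, rfl, Or.inl rfl⟩
        · have hdlt := hpar_dist v hv
          obtain ⟨m, hcm, hchm, hlm, hm⟩ := ih (G.dist (par v) r) (by omega) (par v) rfl
          rcases hm with rfl | ⟨m', rfl⟩
          · have hpr : par v = r := by simpa using hlm
            refine ⟨[r], Compat.pair v r, ?_, by simp, Or.inr ⟨[], by rw [hpr]⟩⟩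
            exact List.isChain_pair.2 ⟨hv, Or.inl hpr⟩
          · set u := par v with hu
            have hur : u ≠ r := by
              intro h
              have h1 := (List.isChain_cons_cons.1 hchm).1
              rw [h] at h1
              rw [hparr] at h1
              exact h1.1 rfl
            have hrtg : Relation.ReflTransGen (stp u) v (par u) :=
              hloc u v (par u) (hsadj_par v hv) (hsadj_symm (hsadj_par u hur))
            obtain ⟨mm, h1, h2, h3⟩ := P1 u v (par u) m' hrtg hcm hchm
            refine ⟨u :: mm, h1, h2, ?_, Or.inr ⟨mm, rfl⟩⟩
            rw [show ((v :: u :: mm).getLast (by simp)) = ((v :: u :: mm).getLast (by simp)) from rfl]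
            rw [← hlm]
            exact h3
  -- composing two walks to the root
  have compose : ∀ u w : V, ∃ l : List V, Compat (↑T) l ∧ List.Chain' sadj l ∧
      l.head? = some u ∧ l.getLast? = some w := by
    intro u w
    obtain ⟨mu, hcu, hchu, hlu, -⟩ := P2 _ u rfl
    obtain ⟨mw, hcw, hchw, hlw, -⟩ := P2 _ w rfl
    have hcw2 : Compat (↑T) (w :: mw).reverse := compat_reverse hcw
    have hchw2 : List.Chain' sadj (w :: mw).reverse := by
      refine List.isChain_reverse.2 ?_
      exact hchw.imp (fun a b h => hsadj_symm h)
    have hheadw2 : ((w :: mw).reverse).head? = some r := by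
      rw [List.head?_reverse, List.getLast?_eq_getLast_of_ne_nil (by simp), hlw]
    have hlastw2 : ((w :: mw).reverse).getLast? = some w := by
      rw [List.getLast?_reverse]; rfl
    rcases hmu : mu with _ | ⟨b, mu'⟩
    · have hur : u = r := by rw [hmu] at hlu; simpa using hlu
      refine ⟨(w :: mw).reverse, hcw2, hchw2, ?_, hlastw2⟩
      rw [hheadw2, hur]
    rcases hmw : mw with _ | ⟨bw, mw'⟩
    · have hwr : w = r := by rw [hmw] at hlw; simpa using hlw
      refine ⟨u :: mu, hcu, hchu, rfl, ?_⟩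
      rw [List.getLast?_eq_getLast_of_ne_nil (by simp), hlu, hwr]
    subst hmu
    subst hmw
    obtain ⟨x, B, hrev⟩ : ∃ x B, (u :: b :: mu').reverse = r :: x :: B := by
      have hlen : 2 ≤ (u :: b :: mu').reverse.length := by simp
      have hhead : (u :: b :: mu').reverse.head? = some r := by
        rw [List.head?_reverse, List.getLast?_eq_getLast_of_ne_nil (by simp), hlu]
      rcases hr2 : (u :: b :: mu').reverse with _ | ⟨a0, _ | ⟨x, B⟩⟩
      · rw [hr2] at hlen; simp at hlen
      · rw [hr2] at hlen; simp at hlen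
      · rw [hr2] at hhead
        have : a0 = r := by simpa using hhead
        exact ⟨x, B, by rw [this]⟩
    obtain ⟨y, C, hrev2⟩ : ∃ y C, (w :: bw :: mw').reverse = r :: y :: C := by
      have hlen : 2 ≤ (w :: bw :: mw').reverse.length := by simp
      rcases hr2 : (w :: bw :: mw').reverse with _ | ⟨a0, _ | ⟨y, C⟩⟩
      · rw [hr2] at hlen; simp at hlen
      · rw [hr2] at hlen; simp at hlen
      · rw [hr2] at hheadw2
        have : a0 = r := by simpa using hheadw2
        exact ⟨y, C, by rw [this]⟩
    have hchrev : List.Chain' sadj (r :: x :: B) := by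
      rw [← hrev]; refine List.isChain_reverse.2 ?_
      exact hchu.imp (fun a b h => hsadj_symm h)
    have hsxr : sadj x r := hsadj_symm (List.isChain_cons_cons.1 hchrev).1
    have hchw3 : List.Chain' sadj (r :: y :: C) := by rw [← hrev2]; exact hchw2
    have hcw3 : Compat (↑T) (r :: y :: C) := by rw [← hrev2]; exact hcw2
    have hsyr : sadj y r := hsadj_symm (List.isChain_cons_cons.1 hchw3).1
    obtain ⟨mm, hq1, hq2, hq3⟩ := P1 r x y C (hloc r x y hsxr hsyr) hcw3 hchw3
    have hL1eq : u :: b :: mu' = B.reverse ++ [x, r] := by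
      have h5 := congrArg List.reverse hrev
      rw [List.reverse_reverse] at h5
      rw [h5]
      simp
    refine ⟨B.reverse ++ (x :: r :: mm), ?_, ?_, ?_, ?_⟩
    · exact compat_overlap_append _ x r mm (by rw [← hL1eq]; exact hcu) hq1
    · have c1 : List.Chain' sadj (B.reverse ++ [x, r]) := by rw [← hL1eq]; exact hchu
      have c2 : List.Chain' sadj ((B.reverse ++ [x, r]) ++ mm) :=
        List.IsChain.append_overlap c1 hq2 (by simp)
      have : (B.reverse ++ [x, r]) ++ mm = B.reverse ++ (x :: r :: mm) := by simp
      rwa [this] at c2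
    · have h6 : (B.reverse ++ (x :: r :: mm)).head? = (B.reverse ++ [x, r]).head? := by
        cases B.reverse with
        | nil => simp
        | cons q qs => simp
      rw [h6, ← hL1eq]
      rfl
    · rw [List.getLast?_append_of_ne_nil _ (by simp),
        List.getLast?_eq_getLast_of_ne_nil (show x :: r :: mm ≠ [] by simp), hq3]
      rw [hrev2] at hlastw2
      rw [List.getLast?_eq_getLast_of_ne_nil (by simp)] at hlastw2
      exact hlastw2
  have hTconn : G.TConnected ↑T := by
    intro u w
    obtain ⟨l, hcl, hchl2, hh, hl⟩ := compose u w
    obtain ⟨pw, hpw⟩ := chain_to_walk G l u w (hchl2.imp (fun a b h => hsadj_adj a b h)) hh hl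
    exact ⟨pw, by rw [hpw]; exact (compat_iff l).1 hcl⟩
  refine ⟨T, htrans, hTconn, le_trans ?_ hDcard⟩
  rw [hT]
  exact Finset.card_image_le

/-- If a connected graph `G` with at least 2 vertices has a cut vertex, then the
minimum size of a connecting transition set of `G` is exactly `|V(G)| − 2`. -/
theorem stmt10 {V : Type*} [Fintype V] [DecidableEq V] (G : SimpleGraph V)
    (hc : G.Connected) (h2 : 2 ≤ Fintype.card V)
    (p : V) (hp : ¬(G.induce {v : V | v ≠ p}).Connected) :
    IsLeast {n : ℕ | ∃ T : Finset (Sym2 (Sym2 V)),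
      G.ConnectingTransitionSet T ∧ T.card = n} (Fintype.card V - 2) := by
  constructor
  · obtain ⟨T, h1a, h2a, h3a⟩ := upper_bound G hc h2
    have h4a := lower_bound G hc p hp T ⟨h1a, h2a⟩
    exact ⟨T, ⟨h1a, h2a⟩, le_antisymm h3a h4a⟩
  · rintro n ⟨T, hT, rfl⟩
    exact lower_bound G hc p hp T hT
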